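/- Given reals p > 0, q, a, a′ and b > 0, b′ > 0, define h(ξ) = (−q + (ξ/2)·a′ + (1/(2ξ))·a) / (p + (ξ/2)·b′ + (1/(2ξ))·b) for ξ > 0, and set γ = p·a + q·b, γ′ = p·a′ + q·b′, ω = (a·b′ − a′·b)/2. If γ < 0 and γ′ < 0, then ξ₋ := (ω − √(ω² + γ′γ)) / γ′ satisfies ξ₋ > 0 and h(ξ₋) ≥ h(ξ) for every ξ > 0, i.e. ξ₋ is a global maximum point of h on (0, ∞). (This is the content of Eq. (15) (sol1) in Proposition 3: for each squeezing phase φ with p(φ) true, the squeezing factor ξ̄(φ) = ξ₋(φ) maximizes the teleportation fidelity.) -/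
import Mathlib


/-- The function `h(ξ) = (−q + (ξ/2)a′ + (1/(2ξ))a) / (p + (ξ/2)b′ + (1/(2ξ))b)`
whose maximization over the squeezing factor `ξ` is equivalent to the maximization of the
teleportation fidelity `F(ξ,φ) = [det Γ^tr − h(ξ)]^(−1/2)`. -/
noncomputable def hfun (p q a a' b b' : ℝ) (ξ : ℝ) : ℝ :=
  (-q + (ξ/2) * a' + (1/(2*ξ)) * a) / (p + (ξ/2) * b' + (1/(2*ξ)) * b)

/-- Eq. (15) (sol1) of Proposition 3: if `γ = p a + q b < 0` and `γ′ = p a′ + q b′ < 0`, then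
`ξ₋ = (ω − √(ω² + γ′γ))/γ′` is positive and is a global maximum point of `h` on `(0,∞)`. -/
theorem xi_minus_global_max (p q a a' b b' : ℝ)
    (hp : 0 < p) (hb : 0 < b) (hb' : 0 < b')
    (hγ : p * a + q * b < 0) (hγ' : p * a' + q * b' < 0) :
    let γ := p * a + q * b
    let γ' := p * a' + q * b'
    let ω := (a * b' - a' * b) / 2
    let ξm := (ω - Real.sqrt (ω ^ 2 + γ' * γ)) / γ'
    0 < ξm ∧ ∀ ξ > 0, hfun p q a a' b b' ξ ≤ hfun p q a a' b b' ξm := by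
  intro γ γ' ω ξm
  have hγγ : 0 < γ' * γ := mul_pos_of_neg_of_neg hγ' hγ
  set s := Real.sqrt (ω ^ 2 + γ' * γ) with hsdef
  have hs2 : s ^ 2 = ω ^ 2 + γ' * γ := Real.sq_sqrt (by positivity)
  have hsabs : |ω| < s := by
    rw [← Real.sqrt_sq_eq_abs, hsdef]
    exact Real.sqrt_lt_sqrt (sq_nonneg _) (by linarith)
  have habs := abs_lt.mp hsabs
  have hωs : 0 < ω + s := by linarith [habs.1]
  have hωs' : ω - s < 0 := by linarith [habs.2]
  have hsnn : 0 ≤ s := Real.sqrt_nonneg _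
  have htpos : 0 < ξm := div_pos_of_neg_of_neg hωs' hγ'
  have hγdef : γ = p * a + q * b := rfl
  have hγ'def : γ' = p * a' + q * b' := rfl
  have hωdef : ω = (a * b' - a' * b) / 2 := rfl
  have hγ'ne : γ' ≠ 0 := ne_of_lt hγ'
  have key1 : γ' * ξm = ω - s := by
    show γ' * ((ω - s) / γ') = ω - s
    field_simp
  have key2 : ξm * (ω + s) = -γ := by
    show (ω - s) / γ' * (ω + s) = -γ
    rw [div_mul_eq_mul_div, div_eq_iff hγ'ne]
    linear_combination (-1) * hs2 + (-γ) * hγ'def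
  refine ⟨htpos, ?_⟩
  intro ξ hξ
  have hx : ∀ x : ℝ, 0 < x → hfun p q a a' b b' x
      = (a' * x ^ 2 - 2 * q * x + a) / (b' * x ^ 2 + 2 * p * x + b) := by
    intro x hx
    unfold hfun
    rw [div_eq_div_iff (by positivity) (by positivity)]
    field_simp
    ring
  rw [hx ξ hξ, hx ξm htpos, div_le_div_iff₀ (by positivity) (by positivity)]
  have ident : (a' * ξm ^ 2 - 2 * q * ξm + a) * (b' * ξ ^ 2 + 2 * p * ξ + b)
      - (a' * ξ ^ 2 - 2 * q * ξ + a) * (b' * ξm ^ 2 + 2 * p * ξm + b)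
      = 2 * s * (ξ - ξm) ^ 2 := by
    linear_combination (-2 * (ξ - ξm) * ξ) * key1 + (2 * (ξ - ξm)) * key2
      + (-2 * (ξ - ξm) * ξ * ξm) * hγ'def + (2 * (ξ - ξm)) * hγdef
      + (2 * (ξ - ξm) * (ξ + ξm)) * hωdef
  nlinarith [mul_nonneg hsnn (sq_nonneg (ξ - ξm)), ident]
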